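/- Fix M ≥ 0, μ > 0, a nonempty finite user set K, and for each k ∈ K: a Hermitian positive semidefinite matrix A_k ∈ ℂ^{(M+1)×(M+1)} and a vector a_k ∈ ℂ^{M+1}, so that the surrogate rate is R̃_k(e) = c_k + 2·Re(a_kᴴ e) − eᴴ A_k e with c_k ∈ ℝ, and set f(e) = −(1/μ)·ln( Σ_{k∈K} exp(−μ·R̃_k(e)) ). Let λ_k, ν_k ∈ ℝ satisfy: λ_k·I − A_k and ν_k·I − A_k A_kᴴ are positive semidefinite. Given eⁿ ∈ ℂ^{M+1} with |eⁿ_m| = 1 for all m, define the softmax weights g_k(eⁿ) = exp(−μ·R̃_k(eⁿ))/Σ_{j∈K} exp(−μ·R̃_j(eⁿ)), tp2_k = ‖a_k‖₂² + (M+1)·ν_k + 2·‖A_k a_k‖₁, β = −max_{k∈K}{λ_k} − 2μ·max_{k∈K}{tp2_k}, d = Σ_{k∈K} g_k(eⁿ)·(a_k − A_k eⁿ), u = d − β·eⁿ, and consE = f(eⁿ) + 2(M+1)·β − 2·Re(dᴴ eⁿ). Then for every e ∈ ℂ^{M+1} with |e_m| = 1 for all m: f(e) ≥ 2·Re(uᴴ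 e) + consE, and equality holds at e = eⁿ. -/

import Mathlib

open Matrix
open scoped ComplexOrder

section helpers

lemma dot_re_sum {n : ℕ} (v y : Fin n → ℂ) :
    (star v ⬝ᵥ y).re = ∑ m, ((starRingEnd ℂ) (v m) * y m).re := by
  simp [dotProduct, Complex.re_sum]

lemma dot_self_re {n : ℕ} (v : Fin n → ℂ) :
    (star v ⬝ᵥ v).re = ∑ m, Complex.normSq (v m) := by
  rw [dot_re_sum]
  congr 1; ext m
  rw [← Complex.normSq_eq_conj_mul_self]
  simp

lemma psd_quad {n : ℕ} {A : Matrix (Fin n) (Fin n) ℂ} {t : ℝ}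
    (h : (t • (1 : Matrix (Fin n) (Fin n) ℂ) - A).PosSemidef) (v : Fin n → ℂ) :
    (star v ⬝ᵥ A.mulVec v).re ≤ t * ∑ m, Complex.normSq (v m) := by
  have h0 := h.re_dotProduct_nonneg v
  have he : star v ⬝ᵥ (t • (1 : Matrix (Fin n) (Fin n) ℂ) - A).mulVec v
      = (t : ℂ) * (star v ⬝ᵥ v) - star v ⬝ᵥ A.mulVec v := by
    rw [Matrix.sub_mulVec, dotProduct_sub]
    congr 1
    rw [Matrix.smul_mulVec, Matrix.one_mulVec]
    simp only [dotProduct, Pi.smul_apply, Complex.real_smul, Finset.mul_sum,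
      Pi.star_apply, smul_eq_mul]
    congr 1; ext m; ring
  rw [he] at h0
  have hre : ((t : ℂ) * (star v ⬝ᵥ v)).re = t * ∑ m, Complex.normSq (v m) := by
    rw [Complex.mul_re]
    have h1 := dot_self_re v
    have h2 : (star v ⬝ᵥ v).im = 0 := by
      have : star v ⬝ᵥ v = ((∑ m, Complex.normSq (v m) : ℝ) : ℂ) := by
        simp [dotProduct, Complex.normSq_eq_conj_mul_self]
      rw [this]; simp
    simp [h1, h2]
  simp only [RCLike.re_to_complex] at h0
  rw [Complex.sub_re, hre] at h0
  linarith

lemma herm_dot {n : ℕ} {A : Matrix (Fin n) (Fin n) ℂ} (h : A.IsHermitian)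
    (x y : Fin n → ℂ) : star (A.mulVec x) ⬝ᵥ y = star x ⬝ᵥ A.mulVec y := by
  rw [Matrix.star_mulVec, h.eq, Matrix.dotProduct_mulVec]

lemma re_star_dot_symm {n : ℕ} {A : Matrix (Fin n) (Fin n) ℂ} (h : A.IsHermitian)
    (x y : Fin n → ℂ) : (star x ⬝ᵥ A.mulVec y).re = (star y ⬝ᵥ A.mulVec x).re := by
  rw [Matrix.star_dotProduct, herm_dot h]
  simp [Complex.star_def]

lemma re_dot_sq_le {n : ℕ} (v δ : Fin n → ℂ) :
    (star v ⬝ᵥ δ).re ^ 2 ≤ (∑ m, Complex.normSq (v m)) * (∑ m, Complex.normSq (δ m)) := by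
  have habs : |(star v ⬝ᵥ δ).re| ≤ ∑ m, ‖v m‖ * ‖δ m‖ := by
    rw [dot_re_sum]
    refine (Finset.abs_sum_le_sum_abs _ _).trans ?_
    apply Finset.sum_le_sum
    intro m _
    refine (Complex.abs_re_le_norm _).trans ?_
    rw [norm_mul]
    simp
  have hcs := Finset.sum_mul_sq_le_sq_mul_sq Finset.univ
    (fun m => ‖v m‖) (fun m => ‖δ m‖)
  calc (star v ⬝ᵥ δ).re ^ 2 = |(star v ⬝ᵥ δ).re| ^ 2 := (sq_abs _).symm
    _ ≤ (∑ m, ‖v m‖ * ‖δ m‖) ^ 2 := by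
        apply pow_le_pow_left₀ (abs_nonneg _) habs
    _ ≤ (∑ m, ‖v m‖ ^ 2) * (∑ m, ‖δ m‖ ^ 2) := hcs
    _ = (∑ m, Complex.normSq (v m)) * (∑ m, Complex.normSq (δ m)) := by
        simp [Complex.sq_norm]

lemma sum_dot {n : ℕ} {K : Type*} [Fintype K] (v : K → Fin n → ℂ) (y : Fin n → ℂ) :
    (∑ k, v k) ⬝ᵥ y = ∑ k, v k ⬝ᵥ y := by
  simp only [dotProduct, Finset.sum_apply, Finset.sum_mul]
  rw [Finset.sum_comm]

lemma lse_bound {K : Type*} [Fintype K] [Nonempty K]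
    (w x : K → ℝ) (hw : ∀ k, 0 < w k) (hsum : ∑ k, w k = 1)
    (B : ℝ) (hB : ∀ k, x k ^ 2 ≤ B) :
    Real.log (∑ k, w k * Real.exp (x k)) ≤ (∑ k, w k * x k) + B / 2 := by
  set m : ℝ := ∑ k, w k * x k with hm
  set S : ℝ → ℝ := fun t => ∑ k, w k * Real.exp (t * x k) with hS
  set S1 : ℝ → ℝ := fun t => ∑ k, (w k * x k) * Real.exp (t * x k) with hS1
  set S2 : ℝ → ℝ := fun t => ∑ k, (w k * x k ^ 2) * Real.exp (t * x k) with hS2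
  have hSpos : ∀ t, 0 < S t := fun t =>
    Finset.sum_pos (fun k _ => mul_pos (hw k) (Real.exp_pos _)) Finset.univ_nonempty
  have hdS : ∀ t, HasDerivAt S (S1 t) t := by
    intro t
    have : HasDerivAt S (∑ k, (w k * (Real.exp (t * x k) * x k))) t := by
      apply HasDerivAt.fun_sum
      intro k _
      exact ((hasDerivAt_mul_const (x k)).exp).const_mul (w k)
    convert this using 1
    apply Finset.sum_congr rfl; intro k _; ring
  have hdS1 : ∀ t, HasDerivAt S1 (S2 t) t := by
    intro t
    have : HasDerivAt S1 (∑ k, ((w k * x k) * (Real.exp (t * x k) * x k))) t := by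
      apply HasDerivAt.fun_sum
      intro k _
      exact ((hasDerivAt_mul_const (x k)).exp).const_mul (w k * x k)
    convert this using 1
    apply Finset.sum_congr rfl; intro k _; ring
  set g : ℝ → ℝ := fun t => Real.log (S t) - t * m - t ^ 2 * B / 2 with hg
  set g' : ℝ → ℝ := fun t => S1 t / S t - m - t * B with hg'
  have hdg : ∀ t, HasDerivAt g (g' t) t := by
    intro t
    have h1 : HasDerivAt (fun t => Real.log (S t)) (S1 t / S t) t :=
      (hdS t).log (hSpos t).ne'
    have h2 : HasDerivAt (fun t : ℝ => t * m) m t := hasDerivAt_mul_const m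
    have h3 : HasDerivAt (fun t : ℝ => t ^ 2 * B / 2) (t * B) t := by
      have : HasDerivAt (fun t : ℝ => t ^ 2) (2 * t) t := by
        simpa using (hasDerivAt_pow 2 t)
      have := (this.mul_const B).div_const 2
      exact this.congr_deriv (by ring)
    exact (h1.sub h2).sub h3
  have hdg' : ∀ t, HasDerivAt g' ((S2 t * S t - S1 t ^ 2) / (S t) ^ 2 - B) t := by
    intro t
    have h1 : HasDerivAt (fun t => S1 t / S t)
        ((S2 t * S t - S1 t * S1 t) / (S t) ^ 2) t :=
      (hdS1 t).div (hdS t) (hSpos t).ne'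
    have h2 : HasDerivAt (fun t : ℝ => t * B) B t := hasDerivAt_mul_const B
    have := (h1.sub_const m).sub h2
    exact this.congr_deriv (by ring)
  have hS2le : ∀ t, S2 t ≤ B * S t := by
    intro t
    rw [Finset.mul_sum]
    apply Finset.sum_le_sum
    intro k _
    have h := mul_le_mul_of_nonneg_right
      (mul_le_mul_of_nonneg_left (hB k) (hw k).le) (Real.exp_pos (t * x k)).le
    calc w k * x k ^ 2 * Real.exp (t * x k) ≤ w k * B * Real.exp (t * x k) := h
      _ = B * (w k * Real.exp (t * x k)) := by ring
  have hg''nonpos : ∀ t : ℝ, (S2 t * S t - S1 t ^ 2) / (S t) ^ 2 - B ≤ 0 := by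
    intro t
    rw [sub_nonpos, div_le_iff₀ (pow_pos (hSpos t) 2)]
    nlinarith [hS2le t, hSpos t, sq_nonneg (S1 t)]
  have hg'anti : Antitone g' := by
    apply antitone_of_deriv_nonpos
    · exact fun t => (hdg' t).differentiableAt
    · intro t
      rw [(hdg' t).deriv]
      exact hg''nonpos t
  have hg'0 : g' 0 = 0 := by
    have hS0 : S 0 = 1 := by
      simp only [hS]; simp [hsum]
    have hS10 : S1 0 = m := by
      simp only [hS1, hm]; simp
    simp [hg', hS0, hS10]
  have hg'le : ∀ t ∈ Set.Icc (0:ℝ) 1, g' t ≤ 0 := fun t ht =>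
    (hg'anti ht.1).trans (le_of_eq hg'0)
  have hgdiff : Differentiable ℝ g := fun t => (hdg t).differentiableAt
  have hganti : AntitoneOn g (Set.Icc 0 1) := by
    apply antitoneOn_of_deriv_nonpos (convex_Icc 0 1) hgdiff.continuous.continuousOn
    · intro t ht
      exact (hdg t).differentiableAt.differentiableWithinAt
    · intro t ht
      rw [(hdg t).deriv]
      exact hg'le t (interior_subset ht)
  have hle := hganti (Set.left_mem_Icc.2 one_pos.le) (Set.right_mem_Icc.2 one_pos.le) one_pos.le
  have hg0 : g 0 = 0 := by
    have hS0 : S 0 = 1 := by simp only [hS]; simp [hsum]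
    simp [hg, hS0]
  have hg1 : g 1 = Real.log (∑ k, w k * Real.exp (x k)) - m - B / 2 := by
    simp [hg, hS]
  rw [hg0, hg1] at hle
  linarith

end helpers

/-- Theorem 4 of the paper: explicit linear minorizer, with closed-form
curvature constant `β`, of the log-sum-exp smoothed group objective
`f(e) = −(1/μ)ln(Σ_k exp(−μ·R̃_k(e)))`, `R̃_k(e) = c_k + 2Re(a_kᴴe) − eᴴA_k e`, with
respect to the unit-modulus reflection coefficient vector `e`; tight at `e = eⁿ`. -/
theorem stmt16 (M : ℕ) (μ : ℝ) (hμ : 0 < μ)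
    {K : Type*} [Fintype K] [Nonempty K]
    (A : K → Matrix (Fin (M + 1)) (Fin (M + 1)) ℂ) (hA : ∀ k, (A k).PosSemidef)
    (a : K → Fin (M + 1) → ℂ) (c : K → ℝ)
    (Rt : K → (Fin (M + 1) → ℂ) → ℝ)
    (hRt : ∀ k e, Rt k e = c k + 2 * (star (a k) ⬝ᵥ e).re
        - (star e ⬝ᵥ (A k).mulVec e).re)
    (f : (Fin (M + 1) → ℂ) → ℝ)
    (hf : ∀ e, f e = -(1 / μ) * Real.log (∑ k, Real.exp (-μ * Rt k e)))
    (lam nu : K → ℝ)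
    (hlam : ∀ k, (lam k • (1 : Matrix (Fin (M + 1)) (Fin (M + 1)) ℂ) - A k).PosSemidef)
    (hnu : ∀ k, (nu k • (1 : Matrix (Fin (M + 1)) (Fin (M + 1)) ℂ)
        - A k * (A k).conjTranspose).PosSemidef)
    (en : Fin (M + 1) → ℂ) (hen : ∀ m, ‖en m‖ = 1)
    (w : K → ℝ)
    (hw : ∀ k, w k = Real.exp (-μ * Rt k en) / ∑ j, Real.exp (-μ * Rt j en))
    (tp2 : K → ℝ)
    (htp2 : ∀ k, tp2 k = (∑ m, ‖a k m‖ ^ 2) + ((M : ℝ) + 1) * nu k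
        + 2 * ∑ m, ‖(A k).mulVec (a k) m‖)
    (β : ℝ)
    (hβ : β = -(Finset.univ.sup' Finset.univ_nonempty lam)
        - 2 * μ * Finset.univ.sup' Finset.univ_nonempty tp2)
    (d u : Fin (M + 1) → ℂ)
    (hd : d = ∑ k, w k • (a k - (A k).mulVec en))
    (hu : u = d - β • en)
    (consE : ℝ)
    (hconsE : consE = f en + 2 * ((M : ℝ) + 1) * β - 2 * (star d ⬝ᵥ en).re) :
    (∀ e : Fin (M + 1) → ℂ, (∀ m, ‖e m‖ = 1) →
      f e ≥ 2 * (star u ⬝ᵥ e).re + consE) ∧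
    f en = 2 * (star u ⬝ᵥ en).re + consE := by
  have hAH : ∀ k, (A k).IsHermitian := fun k => (hA k).1
  set L : ℝ := Finset.univ.sup' Finset.univ_nonempty lam with hL
  set T : ℝ := Finset.univ.sup' Finset.univ_nonempty tp2 with hT
  set Sn : ℝ := ∑ j, Real.exp (-μ * Rt j en) with hSn
  have hSnpos : 0 < Sn :=
    Finset.sum_pos (fun j _ => Real.exp_pos _) Finset.univ_nonempty
  have hwpos : ∀ k, 0 < w k := fun k => by
    rw [hw]; exact div_pos (Real.exp_pos _) hSnpos
  have hwsum : ∑ k, w k = 1 := by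
    simp_rw [hw]
    rw [← Finset.sum_div, ← hSn, div_self hSnpos.ne']
  -- en norm facts
  have henN : ∑ m, Complex.normSq (en m) = (M : ℝ) + 1 := by
    have h1 : ∀ m, Complex.normSq (en m) = 1 := by
      intro m; rw [Complex.normSq_eq_norm_sq, hen m]; norm_num
    rw [Finset.sum_congr rfl (fun m _ => h1 m), Finset.sum_const, Finset.card_univ,
      Fintype.card_fin, nsmul_eq_mul, mul_one]
    push_cast
    ring
  -- real smul dot fact
  have hsmul_dot : ∀ (r : ℝ) (v y : Fin (M + 1) → ℂ),
      star (r • v) ⬝ᵥ y = (r : ℂ) * (star v ⬝ᵥ y) := by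
    intro r v y
    have : star (r • v) = (r : ℂ) • star v := by
      ext m; simp [Complex.real_smul]
    rw [this, smul_dotProduct, smul_eq_mul]
  -- star u ⬝ᵥ e decomposition
  have hu_dot : ∀ y : Fin (M + 1) → ℂ,
      (star u ⬝ᵥ y).re = (star d ⬝ᵥ y).re - β * (star en ⬝ᵥ y).re := by
    intro y
    rw [hu]
    have : star (d - β • en) ⬝ᵥ y = star d ⬝ᵥ y - (β : ℂ) * (star en ⬝ᵥ y) := by
      rw [star_sub, sub_dotProduct, hsmul_dot]
    rw [this]
    simp [Complex.sub_re, Complex.mul_re, Complex.ofReal_re, Complex.ofReal_im]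
  -- equality part
  have heq : f en = 2 * (star u ⬝ᵥ en).re + consE := by
    rw [hu_dot en, hconsE]
    have : (star en ⬝ᵥ en).re = (M : ℝ) + 1 := by rw [dot_self_re, henN]
    rw [this]; ring
  refine ⟨?_, heq⟩
  intro e he
  set δ : Fin (M + 1) → ℂ := e - en with hδ
  set N2 : ℝ := ∑ m, Complex.normSq (δ m) with hN2
  have hN2nonneg : 0 ≤ N2 :=
    Finset.sum_nonneg fun m _ => Complex.normSq_nonneg _
  have he' : e = en + δ := by ext m; simp [hδ]
  -- Claim A
  have claimA : ∀ k, Rt k e - Rt k en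
      = 2 * (star (a k - (A k).mulVec en) ⬝ᵥ δ).re
        - (star δ ⬝ᵥ (A k).mulVec δ).re := by
    intro k
    rw [hRt k e, hRt k en]
    have h1 : star (a k) ⬝ᵥ e = star (a k) ⬝ᵥ en + star (a k) ⬝ᵥ δ := by
      rw [he', dotProduct_add]
    have h2 : (star e ⬝ᵥ (A k).mulVec e).re
        = (star en ⬝ᵥ (A k).mulVec en).re + 2 * (star en ⬝ᵥ (A k).mulVec δ).re
          + (star δ ⬝ᵥ (A k).mulVec δ).re := by
      rw [he', Matrix.mulVec_add, star_add, add_dotProduct,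
        dotProduct_add, dotProduct_add]
      have := re_star_dot_symm (hAH k) δ en
      simp only [Complex.add_re]
      linarith
    have h3 : star (a k - (A k).mulVec en) ⬝ᵥ δ
        = star (a k) ⬝ᵥ δ - star en ⬝ᵥ (A k).mulVec δ := by
      rw [star_sub, sub_dotProduct, herm_dot (hAH k)]
    rw [h1, h3]
    simp only [Complex.add_re, Complex.sub_re]
    linarith [h2]
  -- midpoint
  set eb : Fin (M + 1) → ℂ := en + (2 : ℂ)⁻¹ • δ with heb
  have hebm : ∀ m, ‖eb m‖ ≤ 1 := by
    intro m
    have : eb m = (e m + en m) / 2 := by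
      simp only [heb, Pi.add_apply, Pi.smul_apply, smul_eq_mul, hδ, Pi.sub_apply]
      ring
    rw [this]
    rw [norm_div, Complex.norm_two]
    refine (div_le_one (by norm_num : (0:ℝ) < 2)).2 ?_
    calc ‖e m + en m‖ ≤ ‖e m‖ + ‖en m‖ :=
          norm_add_le _ _
      _ = 2 := by rw [he m, hen m]; norm_num
  have hebN : ∑ m, Complex.normSq (eb m) ≤ (M : ℝ) + 1 := by
    calc ∑ m, Complex.normSq (eb m) ≤ ∑ m : Fin (M + 1), (1 : ℝ) := by
          apply Finset.sum_le_sum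
          intro m _
          rw [Complex.normSq_eq_norm_sq]
          calc ‖eb m‖ ^ 2 ≤ 1 ^ 2 :=
                pow_le_pow_left₀ (norm_nonneg _) (hebm m) 2
            _ = 1 := one_pow 2
      _ = (M : ℝ) + 1 := by
          rw [Finset.sum_const, Finset.card_univ, Fintype.card_fin, nsmul_eq_mul, mul_one]
          push_cast; ring
  -- Claim B : midpoint representation
  have claimB : ∀ k, Rt k e - Rt k en
      = 2 * (star (a k - (A k).mulVec eb) ⬝ᵥ δ).re := by
    intro k
    rw [claimA k]
    have h1 : (A k).mulVec eb = (A k).mulVec en + (2 : ℂ)⁻¹ • (A k).mulVec δ := by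
      rw [heb, Matrix.mulVec_add, Matrix.mulVec_smul]
    have h2 : star (a k - (A k).mulVec eb) ⬝ᵥ δ
        = star (a k - (A k).mulVec en) ⬝ᵥ δ
          - (2 : ℂ)⁻¹ * (star ((A k).mulVec δ) ⬝ᵥ δ) := by
      rw [h1]
      have : a k - ((A k).mulVec en + (2 : ℂ)⁻¹ • (A k).mulVec δ)
          = (a k - (A k).mulVec en) - (2 : ℂ)⁻¹ • (A k).mulVec δ := by
        ext m
        simp only [Pi.sub_apply, Pi.add_apply, Pi.smul_apply, smul_eq_mul]
        ring
      rw [this, star_sub, sub_dotProduct]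
      congr 1
      have : star ((2 : ℂ)⁻¹ • (A k).mulVec δ) = (2 : ℂ)⁻¹ • star ((A k).mulVec δ) := by
        ext m; simp
      rw [this, smul_dotProduct, smul_eq_mul]
    rw [h2, herm_dot (hAH k)]
    have : ((2 : ℂ)⁻¹ * (star δ ⬝ᵥ (A k).mulVec δ)).re
        = (star δ ⬝ᵥ (A k).mulVec δ).re / 2 := by
      rw [Complex.mul_re]
      norm_num
      ring
    simp only [Complex.sub_re, this]
    ring
  -- Claim C : norm bound on v_k := a k - A k eb
  have claimC : ∀ k, ∑ m, Complex.normSq ((a k - (A k).mulVec eb) m) ≤ tp2 k := by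
    intro k
    set v : Fin (M + 1) → ℂ := a k - (A k).mulVec eb with hv
    have hexp : (star v ⬝ᵥ v).re
        = (star (a k) ⬝ᵥ a k).re - 2 * (star (a k) ⬝ᵥ (A k).mulVec eb).re
          + (star ((A k).mulVec eb) ⬝ᵥ (A k).mulVec eb).re := by
      rw [hv, star_sub, sub_dotProduct, dotProduct_sub,
        dotProduct_sub]
      have hsymm : (star ((A k).mulVec eb) ⬝ᵥ a k).re
          = (star (a k) ⬝ᵥ (A k).mulVec eb).re := by
        rw [Matrix.star_dotProduct]
        simp [Complex.star_def]
      simp only [Complex.sub_re]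
      linarith [hsymm]
    -- quadratic term
    have hquad : (star ((A k).mulVec eb) ⬝ᵥ (A k).mulVec eb).re
        ≤ ((M : ℝ) + 1) * nu k := by
      have h1 : star ((A k).mulVec eb) ⬝ᵥ (A k).mulVec eb
          = star eb ⬝ᵥ (A k * (A k).conjTranspose).mulVec eb := by
        rw [herm_dot (hAH k), Matrix.mulVec_mulVec, (hAH k).eq]
      rw [h1]
      have h2 := psd_quad (hnu k) eb
      have hnu0 : 0 ≤ nu k := by
        set v0 : Fin (M + 1) → ℂ := Pi.single 0 1 with hv0
        have hs : ∑ m, Complex.normSq (v0 m) = 1 := by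
          rw [hv0]
          rw [Fintype.sum_eq_single (0 : Fin (M + 1))]
          · simp
          · intro m hm; simp [Pi.single_apply, hm]
        have h3 := psd_quad (hnu k) v0
        rw [hs, mul_one] at h3
        have h4 : 0 ≤ (star v0 ⬝ᵥ (A k * (A k).conjTranspose).mulVec v0).re := by
          have hps : (A k * (A k).conjTranspose).PosSemidef := by
            have := Matrix.posSemidef_conjTranspose_mul_self ((A k).conjTranspose)
            simpa using this
          exact hps.re_dotProduct_nonneg v0
        linarith
      calc (star eb ⬝ᵥ (A k * (A k).conjTranspose).mulVec eb).re
          ≤ nu k * ∑ m, Complex.normSq (eb m) := h2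
        _ ≤ nu k * ((M : ℝ) + 1) := mul_le_mul_of_nonneg_left hebN hnu0
        _ = ((M : ℝ) + 1) * nu k := by ring
    -- cross term
    have hcross : -(2 * (star (a k) ⬝ᵥ (A k).mulVec eb).re)
        ≤ 2 * ∑ m, ‖(A k).mulVec (a k) m‖ := by
      have h1 : star (a k) ⬝ᵥ (A k).mulVec eb
          = star (star eb ⬝ᵥ (A k).mulVec (a k)) := by
        rw [Matrix.star_dotProduct, herm_dot (hAH k)]
      have h2 : |(star (a k) ⬝ᵥ (A k).mulVec eb).re|
          ≤ ∑ m, ‖(A k).mulVec (a k) m‖ := by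
        rw [h1]
        have : (star (star eb ⬝ᵥ (A k).mulVec (a k))).re
            = (star eb ⬝ᵥ (A k).mulVec (a k)).re := by
          simp [Complex.star_def]
        rw [this]
        refine (Complex.abs_re_le_norm _).trans ?_
        rw [dotProduct]
        refine (norm_sum_le _ _).trans ?_
        apply Finset.sum_le_sum
        intro m _
        rw [norm_mul]
        calc ‖star eb m‖ * ‖(A k).mulVec (a k) m‖
            ≤ 1 * ‖(A k).mulVec (a k) m‖ := by
              apply mul_le_mul_of_nonneg_right _ (norm_nonneg _)
              simpa using hebm m
          _ = ‖(A k).mulVec (a k) m‖ := one_mul _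
      have := neg_abs_le ((star (a k) ⬝ᵥ (A k).mulVec eb).re)
      linarith
    have haN : (star (a k) ⬝ᵥ a k).re = ∑ m, ‖a k m‖ ^ 2 := by
      rw [dot_self_re]
      congr 1; ext m; rw [Complex.normSq_eq_norm_sq]
    rw [← dot_self_re]
    rw [htp2 k]
    rw [hexp, haN]
    linarith [hquad, hcross]
  -- tp2 nonneg and sup bounds
  have htp2nonneg : ∀ k, 0 ≤ tp2 k := fun k =>
    le_trans (Finset.sum_nonneg fun m _ => Complex.normSq_nonneg _) (claimC k)
  have hTle : ∀ k, tp2 k ≤ T := fun k =>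
    Finset.le_sup' tp2 (Finset.mem_univ k)
  have hLle : ∀ k, lam k ≤ L := fun k =>
    Finset.le_sup' lam (Finset.mem_univ k)
  have hT0 : 0 ≤ T := le_trans (htp2nonneg (Classical.arbitrary K)) (hTle _)
  -- Claim D : Δ² bound
  have claimD : ∀ k, (Rt k e - Rt k en) ^ 2 ≤ 4 * T * N2 := by
    intro k
    rw [claimB k]
    have h1 := re_dot_sq_le (a k - (A k).mulVec eb) δ
    have h2 : (∑ m, Complex.normSq ((a k - (A k).mulVec eb) m)) * N2 ≤ T * N2 :=
      mul_le_mul_of_nonneg_right ((claimC k).trans (hTle k)) hN2nonneg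
    calc (2 * (star (a k - (A k).mulVec eb) ⬝ᵥ δ).re) ^ 2
        = 4 * (star (a k - (A k).mulVec eb) ⬝ᵥ δ).re ^ 2 := by ring
      _ ≤ 4 * ((∑ m, Complex.normSq ((a k - (A k).mulVec eb) m)) * N2) := by
          rw [← hN2] at h1; linarith
      _ ≤ 4 * (T * N2) := by linarith
      _ = 4 * T * N2 := by ring
  -- Claim E : per-k lower bound
  have claimE : ∀ k, Rt k e - Rt k en
      ≥ 2 * (star (a k - (A k).mulVec en) ⬝ᵥ δ).re - L * N2 := by
    intro k
    rw [claimA k]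
    have h1 := psd_quad (hlam k) δ
    have h2 : lam k * N2 ≤ L * N2 := mul_le_mul_of_nonneg_right (hLle k) hN2nonneg
    rw [← hN2] at h1
    linarith
  -- Claim F : gradient identity
  have claimF : (star d ⬝ᵥ δ).re
      = ∑ k, w k * (star (a k - (A k).mulVec en) ⬝ᵥ δ).re := by
    rw [hd]
    have h1 : star (∑ k, w k • (a k - (A k).mulVec en))
        = ∑ k, star (w k • (a k - (A k).mulVec en)) := by
      rw [star_sum]
    rw [h1, sum_dot, Complex.re_sum]
    apply Finset.sum_congr rfl
    intro k _
    rw [hsmul_dot (w k)]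
    simp [Complex.mul_re, Complex.ofReal_re, Complex.ofReal_im]
  -- the smoothing bound
  have hfe : f e - f en
      = -(1 / μ) * Real.log (∑ k, w k * Real.exp (-μ * (Rt k e - Rt k en))) := by
    have hterm : ∀ k, w k * Real.exp (-μ * (Rt k e - Rt k en))
        = Real.exp (-μ * Rt k e) / Sn := by
      intro k
      rw [hw k]
      rw [div_mul_eq_mul_div]
      congr 1
      rw [← Real.exp_add]
      congr 1
      ring
    rw [Finset.sum_congr rfl (fun k _ => hterm k), ← Finset.sum_div]
    rw [Real.log_div
      (Finset.sum_pos (fun k _ => Real.exp_pos _) Finset.univ_nonempty).ne' hSnpos.ne']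
    rw [hf e, hf en]
    ring
  have hlse := lse_bound w (fun k => -μ * (Rt k e - Rt k en)) hwpos hwsum
    (μ ^ 2 * (4 * T * N2)) (by
      intro k
      have := claimD k
      have h := mul_le_mul_of_nonneg_left this (sq_nonneg μ)
      calc (-μ * (Rt k e - Rt k en)) ^ 2 = μ ^ 2 * (Rt k e - Rt k en) ^ 2 := by ring
        _ ≤ μ ^ 2 * (4 * T * N2) := h)
  have hflow : f e ≥ f en + (∑ k, w k * (Rt k e - Rt k en)) - 2 * μ * T * N2 := by
    have h1 : -(1 / μ) * Real.log (∑ k, w k * Real.exp (-μ * (Rt k e - Rt k en)))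
        ≥ -(1 / μ) * ((∑ k, w k * (-μ * (Rt k e - Rt k en))) + μ ^ 2 * (4 * T * N2) / 2) := by
      apply mul_le_mul_of_nonpos_left hlse
      simp
      positivity
    have h2 : -(1 / μ) * ((∑ k, w k * (-μ * (Rt k e - Rt k en))) + μ ^ 2 * (4 * T * N2) / 2)
        = (∑ k, w k * (Rt k e - Rt k en)) - 2 * μ * T * N2 := by
      have h3 : (∑ k, w k * (-μ * (Rt k e - Rt k en)))
          = -μ * ∑ k, w k * (Rt k e - Rt k en) := by
        rw [Finset.mul_sum]
        exact Finset.sum_congr rfl (fun k _ => by ring)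
      rw [h3]
      field_simp
      ring
    have h4 := hfe
    linarith [h1, h2, h4]
  -- combine with claimE, claimF
  have hsumE : ∑ k, w k * (Rt k e - Rt k en)
      ≥ 2 * (star d ⬝ᵥ δ).re - L * N2 := by
    have h1 : ∑ k, w k * (Rt k e - Rt k en)
        ≥ ∑ k, w k * (2 * (star (a k - (A k).mulVec en) ⬝ᵥ δ).re - L * N2) := by
      apply Finset.sum_le_sum
      intro k _
      exact mul_le_mul_of_nonneg_left (claimE k) (hwpos k).le
    have h2 : ∑ k, w k * (2 * (star (a k - (A k).mulVec en) ⬝ᵥ δ).re - L * N2)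
        = 2 * (star d ⬝ᵥ δ).re - L * N2 := by
      have h3 : ∀ k, w k * (2 * (star (a k - (A k).mulVec en) ⬝ᵥ δ).re - L * N2)
          = 2 * (w k * (star (a k - (A k).mulVec en) ⬝ᵥ δ).re) - (L * N2) * w k := by
        intro k; ring
      rw [Finset.sum_congr rfl (fun k _ => h3 k), Finset.sum_sub_distrib,
        ← Finset.mul_sum, ← Finset.mul_sum, hwsum, claimF]
      ring
    linarith [h1, h2]
  -- norm identity
  have hN2id : N2 = 2 * ((M : ℝ) + 1) - 2 * (star en ⬝ᵥ e).re := by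
    rw [hN2]
    have : ∀ m, Complex.normSq (δ m)
        = 2 - 2 * ((starRingEnd ℂ) (en m) * e m).re := by
      intro m
      rw [hδ]
      simp only [Pi.sub_apply]
      rw [Complex.normSq_sub]
      have h1 : Complex.normSq (e m) = 1 := by
        rw [Complex.normSq_eq_norm_sq, he m]; norm_num
      have h2 : Complex.normSq (en m) = 1 := by
        rw [Complex.normSq_eq_norm_sq, hen m]; norm_num
      rw [h1, h2]
      have : (e m * (starRingEnd ℂ) (en m)).re
          = ((starRingEnd ℂ) (en m) * e m).re := by rw [mul_comm]
      rw [this]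
      ring
    rw [Finset.sum_congr rfl (fun m _ => this m), Finset.sum_sub_distrib,
      ← Finset.mul_sum, ← dot_re_sum, Finset.sum_const, Finset.card_univ,
      Fintype.card_fin, nsmul_eq_mul]
    push_cast
    ring
  -- final chain
  have hdel : (star d ⬝ᵥ δ).re = (star d ⬝ᵥ e).re - (star d ⬝ᵥ en).re := by
    rw [hδ, dotProduct_sub]
    simp [Complex.sub_re]
  rw [ge_iff_le, hu_dot e, hconsE]
  rw [hβ] at *
  have : f en + (2 * (star d ⬝ᵥ δ).re - L * N2) - 2 * μ * T * N2
      = 2 * ((star d ⬝ᵥ e).re - (-L - 2 * μ * T) * (star en ⬝ᵥ e).re)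
        + (f en + 2 * ((M : ℝ) + 1) * (-L - 2 * μ * T) - 2 * (star d ⬝ᵥ en).re) := by
    rw [hdel, hN2id]
    ring
  rw [← hL, ← hT] at *
  linarith [hflow, hsumE, this]
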